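/- arXiv:2204.14168 — 2 statements merged into one kernel-verified Lean document; each statement's English description precedes it below -/
import Mathlib

section
/- Let u and v be vertices of a series-parallel dag such that the fork-path of u is a prefix of the fork-path of v. Then u ≼ v (there is a directed path from u to v) if and only if d(u) ≤ d(v). -/
/-- Series-parallel dag shapes: a single vertex, serial composition
(identifying the sink of `g1` with the source of `g2`), or parallel
composition (fresh source with edges to the sources of `g1`, `g2`, and a
fresh sink with edges from their sinks). -/
inductive SP : Type where
  | vert : SP
  | seq : SP → SP → SP
  | par : SP → SP → SP

/-- Non-source vertices of a series-parallel dag. -/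
def NV : SP → Type
  | .vert => Empty
  | .seq g1 g2 => NV g1 ⊕ NV g2
  | .par g1 g2 => ((Unit ⊕ NV g1) ⊕ (Unit ⊕ NV g2)) ⊕ Unit

/-- Vertices: the source, or a non-source vertex. -/
abbrev V (g : SP) : Type := Unit ⊕ NV g

/-- The (unique) source of a series-parallel dag. -/
def src (g : SP) : V g := Sum.inl ()

/-- Embedding of the first component of a serial composition. -/
def emb1 (g1 g2 : SP) : V g1 → V (.seq g1 g2)
  | .inl _ => Sum.inl ()
  | .inr n => Sum.inr (Sum.inl n)

/-- The (unique) sink of a series-parallel dag. -/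
def snk : (g : SP) → V g
  | .vert => Sum.inl ()
  | .seq g1 g2 =>
    match snk g2 with
    | .inl _ => emb1 g1 g2 (snk g1)
    | .inr n => Sum.inr (Sum.inr n)
  | .par _ _ => Sum.inr (Sum.inr ())

/-- Embedding of the second component of a serial composition:
the source of `g2` is identified with the sink of `g1`. -/
def emb2 (g1 g2 : SP) : V g2 → V (.seq g1 g2)
  | .inl _ => emb1 g1 g2 (snk g1)
  | .inr n => Sum.inr (Sum.inr n)

/-- Embedding of the left branch of a parallel composition. -/
def embL (g1 g2 : SP) (v : V g1) : V (.par g1 g2) := Sum.inr (Sum.inl (Sum.inl v))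

/-- Embedding of the right branch of a parallel composition. -/
def embR (g1 g2 : SP) (v : V g2) : V (.par g1 g2) := Sum.inr (Sum.inl (Sum.inr v))

/-- Edges of a series-parallel dag. -/
def Edge : (g : SP) → V g → V g → Prop
  | .vert, _, _ => False
  | .seq g1 g2, u, v =>
      (∃ a b, Edge g1 a b ∧ u = emb1 g1 g2 a ∧ v = emb1 g1 g2 b) ∨
      (∃ a b, Edge g2 a b ∧ u = emb2 g1 g2 a ∧ v = emb2 g1 g2 b)
  | .par g1 g2, u, v =>
      (∃ a b, Edge g1 a b ∧ u = embL g1 g2 a ∧ v = embL g1 g2 b) ∨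
      (∃ a b, Edge g2 a b ∧ u = embR g1 g2 a ∧ v = embR g1 g2 b) ∨
      (u = src (.par g1 g2) ∧ v = embL g1 g2 (src g1)) ∨
      (u = src (.par g1 g2) ∧ v = embR g1 g2 (src g2)) ∨
      (u = embL g1 g2 (snk g1) ∧ v = snk (.par g1 g2)) ∨
      (u = embR g1 g2 (snk g2) ∧ v = snk (.par g1 g2))

/-- `Reach g u v` (`u ≼ v`): there is a directed path (possibly empty) from `u` to `v`. -/
def Reach (g : SP) : V g → V g → Prop := Relation.ReflTransGen (Edge g)

/-- The dag-depth of a vertex (the length of a longest path ending at it),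
computed by the DePa rules: the source has depth 0; at a fork both children
have depth one greater; at a join the new vertex has depth
`1 + max` of the depths of the joining vertices. -/
def depth : (g : SP) → V g → ℕ
  | .vert, _ => 0
  | .seq _ _, .inl _ => 0
  | .seq g1 _, .inr (.inl n) => depth g1 (Sum.inr n)
  | .seq g1 g2, .inr (.inr n) => depth g1 (snk g1) + depth g2 (Sum.inr n)
  | .par _ _, .inl _ => 0
  | .par g1 _, .inr (.inl (.inl v)) => 1 + depth g1 v
  | .par _ g2, .inr (.inl (.inr v)) => 1 + depth g2 v
  | .par g1 g2, .inr (.inr _) => 1 + max (1 + depth g1 (snk g1)) (1 + depth g2 (snk g2))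

/-- The fork-path of a vertex, as a list of bits (`false` = L, `true` = R),
outermost fork first: the root has the empty path, a fork extends the path by
L and R for the two branches, and a join restores the common prefix. -/
def fpath : (g : SP) → V g → List Bool
  | .vert, _ => []
  | .seq _ _, .inl _ => []
  | .seq g1 _, .inr (.inl n) => fpath g1 (Sum.inr n)
  | .seq _ g2, .inr (.inr n) => fpath g2 (Sum.inr n)
  | .par _ _, .inl _ => []
  | .par g1 _, .inr (.inl (.inl v)) => false :: fpath g1 v
  | .par _ g2, .inr (.inl (.inr v)) => true :: fpath g2 v
  | .par _ _, .inr (.inr _) => []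

/-- Longest common prefix of two lists. -/
def lcp : List Bool → List Bool → List Bool
  | a :: as, b :: bs => if a = b then a :: lcp as bs else []
  | _, _ => []

/-! ### Auxiliary lemmas -/

theorem depth_src' (g : SP) : depth g (Sum.inl ()) = 0 := by cases g <;> rfl

theorem fpath_src' (g : SP) : fpath g (Sum.inl ()) = [] := by cases g <;> rfl

theorem depth_emb1 (g1 g2 : SP) (w : V g1) :
    depth (.seq g1 g2) (emb1 g1 g2 w) = depth g1 w := by
  rcases w with ⟨⟩ | n
  · exact (depth_src' g1).symm
  · rfl

theorem snk_seq (g1 g2 : SP) : snk (.seq g1 g2) = emb2 g1 g2 (snk g2) := by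
  show (match snk g2 with
    | .inl _ => emb1 g1 g2 (snk g1)
    | .inr n => Sum.inr (Sum.inr n)) = _
  cases snk g2 <;> rfl

theorem depth_emb2 (g1 g2 : SP) (w : V g2) :
    depth (.seq g1 g2) (emb2 g1 g2 w) = depth g1 (snk g1) + depth g2 w := by
  rcases w with ⟨⟩ | n
  · show depth (.seq g1 g2) (emb1 g1 g2 (snk g1)) = _
    rw [depth_emb1, depth_src', Nat.add_zero]
  · rfl

theorem fpath_emb1 (g1 g2 : SP) (w : V g1) :
    fpath (.seq g1 g2) (emb1 g1 g2 w) = fpath g1 w := by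
  rcases w with ⟨⟩ | n
  · exact (fpath_src' g1).symm
  · rfl

theorem fpath_snk (g : SP) : fpath g (snk g) = [] := by
  induction g with
  | vert => rfl
  | seq g1 g2 ih1 ih2 =>
    rw [snk_seq]
    rcases h : snk g2 with ⟨⟩ | n
    · show fpath (.seq g1 g2) (emb1 g1 g2 (snk g1)) = []
      rw [fpath_emb1, ih1]
    · show fpath g2 (Sum.inr n) = []
      rw [← h, ih2]
  | par g1 g2 ih1 ih2 => rfl

theorem fpath_emb2 (g1 g2 : SP) (w : V g2) :
    fpath (.seq g1 g2) (emb2 g1 g2 w) = fpath g2 w := by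
  rcases w with ⟨⟩ | n
  · show fpath (.seq g1 g2) (emb1 g1 g2 (snk g1)) = _
    rw [fpath_emb1, fpath_snk, fpath_src']
  · rfl

theorem seq_cases (g1 g2 : SP) (w : V (.seq g1 g2)) :
    (∃ w', w = emb1 g1 g2 w') ∨ (∃ n, w = emb2 g1 g2 (Sum.inr n)) := by
  rcases w with ⟨⟩ | (n | n)
  · exact Or.inl ⟨Sum.inl (), rfl⟩
  · exact Or.inl ⟨Sum.inr n, rfl⟩
  · exact Or.inr ⟨n, rfl⟩

theorem par_cases (g1 g2 : SP) (w : V (.par g1 g2)) :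
    w = src (.par g1 g2) ∨ (∃ a, w = embL g1 g2 a) ∨ (∃ a, w = embR g1 g2 a) ∨
      w = snk (.par g1 g2) := by
  rcases w with ⟨⟩ | ((a | a) | ⟨⟩)
  · exact Or.inl rfl
  · exact Or.inr (Or.inl ⟨a, rfl⟩)
  · exact Or.inr (Or.inr (Or.inl ⟨a, rfl⟩))
  · exact Or.inr (Or.inr (Or.inr rfl))

theorem depth_pos (g : SP) (n : NV g) : 1 ≤ depth g (Sum.inr n) := by
  induction g with
  | vert => exact n.elim
  | seq g1 g2 ih1 ih2 =>
    rcases n with n | n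
    · exact ih1 n
    · have := ih2 n
      show 1 ≤ depth g1 (snk g1) + depth g2 (Sum.inr n)
      omega
  | par g1 g2 ih1 ih2 =>
    rcases n with (a | a) | ⟨⟩ <;> exact Nat.le_add_right 1 _

theorem depth_le_snk (g : SP) (w : V g) : depth g w ≤ depth g (snk g) := by
  induction g with
  | vert =>
    rcases w with ⟨⟩ | n
    · exact le_refl 0
    · exact n.elim
  | seq g1 g2 ih1 ih2 =>
    rw [snk_seq, depth_emb2]
    rcases seq_cases g1 g2 w with ⟨w', rfl⟩ | ⟨n, rfl⟩
    · rw [depth_emb1]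
      have := ih1 w'
      omega
    · rw [depth_emb2]
      have := ih2 (Sum.inr n)
      omega
  | par g1 g2 ih1 ih2 =>
    rcases par_cases g1 g2 w with rfl | ⟨a, rfl⟩ | ⟨a, rfl⟩ | rfl
    · exact Nat.zero_le _
    · have := ih1 a
      show 1 + depth g1 a ≤ 1 + max (1 + depth g1 (snk g1)) (1 + depth g2 (snk g2))
      have := le_max_left (1 + depth g1 (snk g1)) (1 + depth g2 (snk g2))
      omega
    · have := ih2 a
      show 1 + depth g2 a ≤ 1 + max (1 + depth g1 (snk g1)) (1 + depth g2 (snk g2))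
      have := le_max_right (1 + depth g1 (snk g1)) (1 + depth g2 (snk g2))
      omega
    · exact le_refl _

theorem edge_emb1 {g1 g2 : SP} {a b : V g1} (h : Edge g1 a b) :
    Edge (.seq g1 g2) (emb1 g1 g2 a) (emb1 g1 g2 b) := Or.inl ⟨a, b, h, rfl, rfl⟩

theorem edge_emb2 {g1 g2 : SP} {a b : V g2} (h : Edge g2 a b) :
    Edge (.seq g1 g2) (emb2 g1 g2 a) (emb2 g1 g2 b) := Or.inr ⟨a, b, h, rfl, rfl⟩

theorem edge_embL {g1 g2 : SP} {a b : V g1} (h : Edge g1 a b) :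
    Edge (.par g1 g2) (embL g1 g2 a) (embL g1 g2 b) := Or.inl ⟨a, b, h, rfl, rfl⟩

theorem edge_embR {g1 g2 : SP} {a b : V g2} (h : Edge g2 a b) :
    Edge (.par g1 g2) (embR g1 g2 a) (embR g1 g2 b) :=
  Or.inr (Or.inl ⟨a, b, h, rfl, rfl⟩)

theorem reach_map {g g' : SP} (f : V g → V g')
    (hf : ∀ a b, Edge g a b → Edge g' (f a) (f b)) {u v : V g} (h : Reach g u v) :
    Reach g' (f u) (f v) :=
  h.lift f hf

theorem reach_snk (g : SP) (w : V g) : Reach g w (snk g) := by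
  induction g with
  | vert =>
    rcases w with ⟨⟩ | n
    · exact .refl
    · exact n.elim
  | seq g1 g2 ih1 ih2 =>
    rw [snk_seq]
    rcases seq_cases g1 g2 w with ⟨w', rfl⟩ | ⟨n, rfl⟩
    · have h1 : Reach (.seq g1 g2) (emb1 g1 g2 w') (emb1 g1 g2 (snk g1)) :=
        reach_map _ (fun _ _ => edge_emb1) (ih1 w')
      have h2 : Reach (.seq g1 g2) (emb2 g1 g2 (src g2)) (emb2 g1 g2 (snk g2)) :=
        reach_map _ (fun _ _ => edge_emb2) (ih2 (src g2))
      exact h1.trans h2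
    · exact reach_map _ (fun _ _ => edge_emb2) (ih2 (Sum.inr n))
  | par g1 g2 ih1 ih2 =>
    have hL : ∀ a : V g1, Reach (.par g1 g2) (embL g1 g2 a) (snk (.par g1 g2)) := by
      intro a
      exact .tail (reach_map _ (fun _ _ => edge_embL) (ih1 a))
        (Or.inr (Or.inr (Or.inr (Or.inr (Or.inl ⟨rfl, rfl⟩)))))
    have hR : ∀ a : V g2, Reach (.par g1 g2) (embR g1 g2 a) (snk (.par g1 g2)) := by
      intro a
      exact .tail (reach_map _ (fun _ _ => edge_embR) (ih2 a))
        (Or.inr (Or.inr (Or.inr (Or.inr (Or.inr ⟨rfl, rfl⟩)))))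
    rcases par_cases g1 g2 w with rfl | ⟨a, rfl⟩ | ⟨a, rfl⟩ | rfl
    · exact .head (Or.inr (Or.inr (Or.inl ⟨rfl, rfl⟩))) (hL (src g1))
    · exact hL a
    · exact hR a
    · exact .refl

theorem reach_src (g : SP) (w : V g) : Reach g (src g) w := by
  induction g with
  | vert =>
    rcases w with ⟨⟩ | n
    · exact .refl
    · exact n.elim
  | seq g1 g2 ih1 ih2 =>
    rcases seq_cases g1 g2 w with ⟨w', rfl⟩ | ⟨n, rfl⟩
    · exact reach_map (emb1 g1 g2) (fun _ _ => edge_emb1) (ih1 w')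
    · have h1 : Reach (.seq g1 g2) (emb1 g1 g2 (src g1)) (emb1 g1 g2 (snk g1)) :=
        reach_map _ (fun _ _ => edge_emb1) (reach_snk g1 (src g1))
      have h2 : Reach (.seq g1 g2) (emb2 g1 g2 (src g2)) (emb2 g1 g2 (Sum.inr n)) :=
        reach_map _ (fun _ _ => edge_emb2) (ih2 (Sum.inr n))
      exact h1.trans h2
  | par g1 g2 ih1 ih2 =>
    rcases par_cases g1 g2 w with rfl | ⟨a, rfl⟩ | ⟨a, rfl⟩ | rfl
    · exact .refl
    · exact .head (Or.inr (Or.inr (Or.inl ⟨rfl, rfl⟩)))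
        (reach_map _ (fun _ _ => edge_embL) (ih1 a))
    · exact .head (Or.inr (Or.inr (Or.inr (Or.inl ⟨rfl, rfl⟩))))
        (reach_map _ (fun _ _ => edge_embR) (ih2 a))
    · exact reach_snk _ _

theorem edge_depth_lt : ∀ (g : SP) (u v : V g), Edge g u v → depth g u < depth g v := by
  intro g
  induction g with
  | vert => exact fun u v h => h.elim
  | seq g1 g2 ih1 ih2 =>
    rintro u v (⟨a, b, e, rfl, rfl⟩ | ⟨a, b, e, rfl, rfl⟩)
    · rw [depth_emb1, depth_emb1]
      exact ih1 a b e
    · rw [depth_emb2, depth_emb2]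
      have := ih2 a b e
      omega
  | par g1 g2 ih1 ih2 =>
    rintro u v (⟨a, b, e, rfl, rfl⟩ | ⟨a, b, e, rfl, rfl⟩ | ⟨rfl, rfl⟩ | ⟨rfl, rfl⟩ |
      ⟨rfl, rfl⟩ | ⟨rfl, rfl⟩)
    · have := ih1 a b e
      show 1 + depth g1 a < 1 + depth g1 b
      omega
    · have := ih2 a b e
      show 1 + depth g2 a < 1 + depth g2 b
      omega
    · show 0 < 1 + depth g1 (src g1)
      omega
    · show 0 < 1 + depth g2 (src g2)
      omega
    · show 1 + depth g1 (snk g1) < 1 + max (1 + depth g1 (snk g1)) (1 + depth g2 (snk g2))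
      have := le_max_left (1 + depth g1 (snk g1)) (1 + depth g2 (snk g2))
      omega
    · show 1 + depth g2 (snk g2) < 1 + max (1 + depth g1 (snk g1)) (1 + depth g2 (snk g2))
      have := le_max_right (1 + depth g1 (snk g1)) (1 + depth g2 (snk g2))
      omega

theorem reach_depth_le {g : SP} {u v : V g} (h : Reach g u v) :
    depth g u ≤ depth g v := by
  induction h with
  | refl => exact le_refl _
  | tail _ e ih => exact ih.trans (edge_depth_lt _ _ _ e).le

theorem reach_of_prefix_depth : ∀ (g : SP) (u v : V g),
    fpath g u <+: fpath g v → depth g u ≤ depth g v → Reach g u v := by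
  intro g
  induction g with
  | vert =>
    rintro (⟨⟩ | n) v _ _
    · rcases v with ⟨⟩ | n
      · exact .refl
      · exact n.elim
    · exact n.elim
  | seq g1 g2 ih1 ih2 =>
    intro u v h hd
    rcases seq_cases g1 g2 u with ⟨u', rfl⟩ | ⟨n, rfl⟩ <;>
      rcases seq_cases g1 g2 v with ⟨v', rfl⟩ | ⟨m, rfl⟩
    · rw [fpath_emb1, fpath_emb1] at h
      rw [depth_emb1, depth_emb1] at hd
      exact reach_map _ (fun _ _ => edge_emb1) (ih1 u' v' h hd)
    · have h1 : Reach (.seq g1 g2) (emb1 g1 g2 u') (emb1 g1 g2 (snk g1)) :=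
        reach_map _ (fun _ _ => edge_emb1) (reach_snk g1 u')
      have h2 : Reach (.seq g1 g2) (emb2 g1 g2 (src g2)) (emb2 g1 g2 (Sum.inr m)) :=
        reach_map _ (fun _ _ => edge_emb2) (reach_src g2 (Sum.inr m))
      exact h1.trans h2
    · exfalso
      rw [depth_emb2, depth_emb1] at hd
      have h1 := depth_pos g2 n
      have h2 := depth_le_snk g1 v'
      omega
    · rw [fpath_emb2, fpath_emb2] at h
      rw [depth_emb2, depth_emb2] at hd
      exact reach_map _ (fun _ _ => edge_emb2)
        (ih2 (Sum.inr n) (Sum.inr m) h (by omega))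
  | par g1 g2 ih1 ih2 =>
    intro u v h hd
    rcases par_cases g1 g2 u with rfl | ⟨a, rfl⟩ | ⟨a, rfl⟩ | rfl <;>
      rcases par_cases g1 g2 v with rfl | ⟨b, rfl⟩ | ⟨b, rfl⟩ | rfl
    · exact .refl
    · exact reach_src _ _
    · exact reach_src _ _
    · exact reach_src _ _
    · exfalso
      have : 1 + depth g1 a ≤ 0 := hd
      omega
    · have hp : fpath g1 a <+: fpath g1 b := by
        have : (false :: fpath g1 a) <+: (false :: fpath g1 b) := h
        rw [List.cons_prefix_cons] at this
        exact this.2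
      have hd' : depth g1 a ≤ depth g1 b := by
        have : 1 + depth g1 a ≤ 1 + depth g1 b := hd
        omega
      exact reach_map _ (fun _ _ => edge_embL) (ih1 a b hp hd')
    · exfalso
      have : (false :: fpath g1 a) <+: (true :: fpath g2 b) := h
      rw [List.cons_prefix_cons] at this
      exact (Bool.false_ne_true this.1)
    · exact reach_snk _ _
    · exfalso
      have : 1 + depth g2 a ≤ 0 := hd
      omega
    · exfalso
      have : (true :: fpath g2 a) <+: (false :: fpath g1 b) := h
      rw [List.cons_prefix_cons] at this
      exact (Bool.false_ne_true this.1.symm)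
    · have hp : fpath g2 a <+: fpath g2 b := by
        have : (true :: fpath g2 a) <+: (true :: fpath g2 b) := h
        rw [List.cons_prefix_cons] at this
        exact this.2
      have hd' : depth g2 a ≤ depth g2 b := by
        have : 1 + depth g2 a ≤ 1 + depth g2 b := hd
        omega
      exact reach_map _ (fun _ _ => edge_embR) (ih2 a b hp hd')
    · exact reach_snk _ _
    · exfalso
      have h1 : 1 + max (1 + depth g1 (snk g1)) (1 + depth g2 (snk g2)) ≤ 0 := hd
      omega
    · exfalso
      have h1 : 1 + max (1 + depth g1 (snk g1)) (1 + depth g2 (snk g2)) ≤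
          1 + depth g1 b := hd
      have h2 := depth_le_snk g1 b
      have := le_max_left (1 + depth g1 (snk g1)) (1 + depth g2 (snk g2))
      omega
    · exfalso
      have h1 : 1 + max (1 + depth g1 (snk g1)) (1 + depth g2 (snk g2)) ≤
          1 + depth g2 b := hd
      have h2 := depth_le_snk g2 b
      have := le_max_right (1 + depth g1 (snk g1)) (1 + depth g2 (snk g2))
      omega
    · exact .refl

/-- if the fork-path of `u` is a prefix of the fork-path of `v`,
then `u ≼ v` iff `d(u) ≤ d(v)`. -/
theorem reach_iff_depth_le_of_prefix (g : SP) (u v : V g)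
    (h : fpath g u <+: fpath g v) :
    Reach g u v ↔ depth g u ≤ depth g v :=
  ⟨reach_depth_le, reach_of_prefix_depth g u v h⟩
end

section
/- Let u and v be vertices of a series-parallel dag with the DePa labeling, assume d(u) ≤ d(v), and let c be the critical vertex of (u, v): the vertex whose fork-path equals the longest common prefix of f(u) and f(v) and whose dag-depth is maximal subject to d(c) ≤ d(v). Then u ≼ v if and only if d(u) ≤ d(c) ≤ d(v). -/
namespace SPaux
open Relation

lemma depth_inl (g : SP) (u : Unit) : depth g (Sum.inl u) = 0 := by cases g <;> rfl
lemma fpath_inl (g : SP) (u : Unit) : fpath g (Sum.inl u) = [] := by cases g <;> rfl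
lemma depth_src (g : SP) : depth g (src g) = 0 := depth_inl g ()
lemma fpath_src (g : SP) : fpath g (src g) = [] := fpath_inl g ()

lemma fpath_emb1 (g1 g2 : SP) (x : V g1) :
    fpath (.seq g1 g2) (emb1 g1 g2 x) = fpath g1 x := by
  cases x with
  | inl u => cases u; exact (fpath_src g1).symm
  | inr n => rfl

lemma depth_emb1 (g1 g2 : SP) (x : V g1) :
    depth (.seq g1 g2) (emb1 g1 g2 x) = depth g1 x := by
  cases x with
  | inl u => cases u; exact (depth_src g1).symm
  | inr n => rfl

lemma fpath_snk (g : SP) : fpath g (snk g) = [] := by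
  induction g with
  | vert => rfl
  | seq g1 g2 ih1 ih2 =>
    show fpath _ (snk (.seq g1 g2)) = []
    rw [snk]
    cases h : snk g2 with
    | inl u => rw [fpath_emb1]; exact ih1
    | inr n => show fpath g2 (Sum.inr n) = []; rw [← h]; exact ih2
  | par g1 g2 ih1 ih2 => rfl

lemma depth_emb2 (g1 g2 : SP) (x : V g2) :
    depth (.seq g1 g2) (emb2 g1 g2 x) = depth g1 (snk g1) + depth g2 x := by
  cases x with
  | inl u => cases u; simp [emb2, depth_emb1, depth_inl]
  | inr n => rfl

lemma fpath_emb2 (g1 g2 : SP) (x : V g2) :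
    fpath (.seq g1 g2) (emb2 g1 g2 x) = fpath g2 x := by
  cases x with
  | inl u => cases u; show fpath _ (emb1 g1 g2 (snk g1)) = _
             rw [fpath_emb1, fpath_snk, fpath_inl]
  | inr n => rfl

lemma snk_seq (g1 g2 : SP) : snk (.seq g1 g2) = emb2 g1 g2 (snk g2) := by
  rw [snk]
  cases h : snk g2 with
  | inl u => cases u; rfl
  | inr n => rfl

lemma reach_emb1 (g1 g2 : SP) {a b : V g1} (h : Reach g1 a b) :
    Reach (.seq g1 g2) (emb1 g1 g2 a) (emb1 g1 g2 b) :=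
  ReflTransGen.lift (r := Edge g1) (p := Edge (.seq g1 g2)) (emb1 g1 g2) (fun _ _ he => Or.inl ⟨_, _, he, rfl, rfl⟩) _ _ h

lemma reach_emb2 (g1 g2 : SP) {a b : V g2} (h : Reach g2 a b) :
    Reach (.seq g1 g2) (emb2 g1 g2 a) (emb2 g1 g2 b) :=
  ReflTransGen.lift (r := Edge g2) (p := Edge (.seq g1 g2)) (emb2 g1 g2) (fun _ _ he => Or.inr ⟨_, _, he, rfl, rfl⟩) _ _ h

lemma reach_embL (g1 g2 : SP) {a b : V g1} (h : Reach g1 a b) :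
    Reach (.par g1 g2) (embL g1 g2 a) (embL g1 g2 b) :=
  ReflTransGen.lift (r := Edge g1) (p := Edge (.par g1 g2)) (embL g1 g2) (fun _ _ he => Or.inl ⟨_, _, he, rfl, rfl⟩) _ _ h

lemma reach_embR (g1 g2 : SP) {a b : V g2} (h : Reach g2 a b) :
    Reach (.par g1 g2) (embR g1 g2 a) (embR g1 g2 b) :=
  ReflTransGen.lift (r := Edge g2) (p := Edge (.par g1 g2)) (embR g1 g2) (fun _ _ he => Or.inr (Or.inl ⟨_, _, he, rfl, rfl⟩)) _ _ h

lemma reach_snk (g : SP) (w : V g) : Reach g w (snk g) := by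
  induction g with
  | vert =>
    rcases w with u | n
    · cases u; exact ReflTransGen.refl
    · exact n.elim
  | seq g1 g2 ih1 ih2 =>
    rw [snk_seq]
    have key : ∀ x : V g1, Reach (.seq g1 g2) (emb1 g1 g2 x) (emb2 g1 g2 (snk g2)) := by
      intro x
      have h1 : Reach (.seq g1 g2) (emb1 g1 g2 x) (emb1 g1 g2 (snk g1)) :=
        reach_emb1 _ _ (ih1 _)
      have h2 : Reach (.seq g1 g2) (emb2 g1 g2 (Sum.inl ())) (emb2 g1 g2 (snk g2)) :=
        reach_emb2 _ _ (ih2 _)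
      exact h1.trans h2
    rcases w with u | (n | n)
    · exact key (Sum.inl u)
    · exact key (Sum.inr n)
    · exact reach_emb2 _ _ (ih2 (Sum.inr n))
  | par g1 g2 ih1 ih2 =>
    have eL : Edge (.par g1 g2) (embL g1 g2 (snk g1)) (snk (.par g1 g2)) := by
      right; right; right; right; left; exact ⟨rfl, rfl⟩
    have eR : Edge (.par g1 g2) (embR g1 g2 (snk g2)) (snk (.par g1 g2)) := by
      right; right; right; right; right; exact ⟨rfl, rfl⟩
    have eS : Edge (.par g1 g2) (src (.par g1 g2)) (embL g1 g2 (src g1)) := by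
      right; right; left; exact ⟨rfl, rfl⟩
    have hL : ∀ x : V g1, Reach (.par g1 g2) (embL g1 g2 x) (snk (.par g1 g2)) :=
      fun x => ReflTransGen.tail (reach_embL _ _ (ih1 x)) eL
    rcases w with u | ((x | x) | u)
    · cases u
      exact ReflTransGen.head eS (hL (src g1))
    · exact hL x
    · exact ReflTransGen.tail (reach_embR _ _ (ih2 x)) eR
    · cases u; exact ReflTransGen.refl

end SPaux
namespace SPaux

lemma depth_embL (g1 g2 : SP) (x : V g1) :
    depth (.par g1 g2) (embL g1 g2 x) = 1 + depth g1 x := rfl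
lemma depth_embR (g1 g2 : SP) (x : V g2) :
    depth (.par g1 g2) (embR g1 g2 x) = 1 + depth g2 x := rfl
lemma fpath_embL (g1 g2 : SP) (x : V g1) :
    fpath (.par g1 g2) (embL g1 g2 x) = false :: fpath g1 x := rfl
lemma fpath_embR (g1 g2 : SP) (x : V g2) :
    fpath (.par g1 g2) (embR g1 g2 x) = true :: fpath g2 x := rfl

lemma depth_parL (g1 g2 : SP) (x : V g1) :
    depth (.par g1 g2) (Sum.inr (Sum.inl (Sum.inl x))) = 1 + depth g1 x := rfl
lemma depth_parR (g1 g2 : SP) (x : V g2) :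
    depth (.par g1 g2) (Sum.inr (Sum.inl (Sum.inr x))) = 1 + depth g2 x := rfl
lemma fpath_parL (g1 g2 : SP) (x : V g1) :
    fpath (.par g1 g2) (Sum.inr (Sum.inl (Sum.inl x))) = false :: fpath g1 x := rfl
lemma fpath_parR (g1 g2 : SP) (x : V g2) :
    fpath (.par g1 g2) (Sum.inr (Sum.inl (Sum.inr x))) = true :: fpath g2 x := rfl
lemma depth_parSnk (g1 g2 : SP) (u : Unit) :
    depth (.par g1 g2) (Sum.inr (Sum.inr u)) =
      1 + max (1 + depth g1 (snk g1)) (1 + depth g2 (snk g2)) := rfl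
lemma fpath_parSnk (g1 g2 : SP) (u : Unit) :
    fpath (.par g1 g2) (Sum.inr (Sum.inr u)) = [] := rfl
lemma depth_seq2 (g1 g2 : SP) (n : NV g2) :
    depth (.seq g1 g2) (Sum.inr (Sum.inr n)) = depth g1 (snk g1) + depth g2 (Sum.inr n) := rfl
lemma fpath_seq2 (g1 g2 : SP) (n : NV g2) :
    fpath (.seq g1 g2) (Sum.inr (Sum.inr n)) = fpath g2 (Sum.inr n) := rfl
lemma depth_seq1 (g1 g2 : SP) (n : NV g1) :
    depth (.seq g1 g2) (Sum.inr (Sum.inl n)) = depth g1 (Sum.inr n) := rfl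
lemma fpath_seq1 (g1 g2 : SP) (n : NV g1) :
    fpath (.seq g1 g2) (Sum.inr (Sum.inl n)) = fpath g1 (Sum.inr n) := rfl

lemma reach_src (g : SP) (w : V g) : Reach g (src g) w := by
  induction g with
  | vert =>
    rcases w with u | n
    · cases u; exact Relation.ReflTransGen.refl
    · exact n.elim
  | seq g1 g2 ih1 ih2 =>
    rcases w with u | (n | n)
    · cases u; exact Relation.ReflTransGen.refl
    · exact reach_emb1 _ _ (ih1 (Sum.inr n))
    · have h1 : Reach (.seq g1 g2) (emb1 g1 g2 (src g1)) (emb1 g1 g2 (snk g1)) :=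
        reach_emb1 _ _ (reach_snk g1 _)
      have h2 : Reach (.seq g1 g2) (emb2 g1 g2 (src g2)) (emb2 g1 g2 (Sum.inr n)) :=
        reach_emb2 _ _ (ih2 _)
      exact h1.trans h2
  | par g1 g2 ih1 ih2 =>
    have eSL : Edge (.par g1 g2) (src (.par g1 g2)) (embL g1 g2 (src g1)) := by
      right; right; left; exact ⟨rfl, rfl⟩
    have eSR : Edge (.par g1 g2) (src (.par g1 g2)) (embR g1 g2 (src g2)) := by
      right; right; right; left; exact ⟨rfl, rfl⟩
    rcases w with u | ((x | x) | u)
    · cases u; exact Relation.ReflTransGen.refl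
    · exact Relation.ReflTransGen.head eSL (reach_embL _ _ (ih1 x))
    · exact Relation.ReflTransGen.head eSR (reach_embR _ _ (ih2 x))
    · cases u
      exact Relation.ReflTransGen.head eSL
        (Relation.ReflTransGen.tail (reach_embL _ _ (reach_snk g1 _))
          (by right; right; right; right; left; exact ⟨rfl, rfl⟩))

lemma edge_depth_lt (g : SP) {u v : V g} (h : Edge g u v) : depth g u < depth g v := by
  induction g with
  | vert => exact h.elim
  | seq g1 g2 ih1 ih2 =>
    rcases h with ⟨a, b, he, rfl, rfl⟩ | ⟨a, b, he, rfl, rfl⟩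
    · rw [depth_emb1, depth_emb1]; exact ih1 he
    · rw [depth_emb2, depth_emb2]; exact Nat.add_lt_add_left (ih2 he) _
  | par g1 g2 ih1 ih2 =>
    rcases h with ⟨a, b, he, rfl, rfl⟩ | ⟨a, b, he, rfl, rfl⟩ | ⟨rfl, rfl⟩ | ⟨rfl, rfl⟩
      | ⟨rfl, rfl⟩ | ⟨rfl, rfl⟩
    · exact Nat.add_lt_add_left (ih1 he) _
    · exact Nat.add_lt_add_left (ih2 he) _
    · show depth (.par g1 g2) (Sum.inl ()) < depth (.par g1 g2) (Sum.inr (Sum.inl (Sum.inl (src g1))))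
      rw [depth_inl, depth_parL]; omega
    · show depth (.par g1 g2) (Sum.inl ()) < depth (.par g1 g2) (Sum.inr (Sum.inl (Sum.inr (src g2))))
      rw [depth_inl, depth_parR]; omega
    · show depth (.par g1 g2) (Sum.inr (Sum.inl (Sum.inl (snk g1)))) <
        depth (.par g1 g2) (Sum.inr (Sum.inr ()))
      rw [depth_parL, depth_parSnk]; omega
    · show depth (.par g1 g2) (Sum.inr (Sum.inl (Sum.inr (snk g2)))) <
        depth (.par g1 g2) (Sum.inr (Sum.inr ()))
      rw [depth_parR, depth_parSnk]; omega

lemma reach_depth_le (g : SP) {u v : V g} (h : Reach g u v) : depth g u ≤ depth g v := by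
  induction h with
  | refl => exact le_rfl
  | tail _ he ih => exact ih.trans (edge_depth_lt g he).le

lemma reach_depth_lt (g : SP) {u v : V g} (h : Reach g u v) (hne : u ≠ v) :
    depth g u < depth g v := by
  rcases (Relation.ReflTransGen.cases_head h) with rfl | ⟨w, he, hr⟩
  · exact absurd rfl hne
  · exact lt_of_lt_of_le (edge_depth_lt g he) (reach_depth_le g hr)

lemma depth_le_snk (g : SP) (w : V g) : depth g w ≤ depth g (snk g) :=
  reach_depth_le g (reach_snk g w)

lemma depth_pos_inr (g : SP) (n : NV g) : 1 ≤ depth g (Sum.inr n) := by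
  have h := reach_depth_lt g (reach_src g (Sum.inr n)) (by simp [src])
  rw [depth_src] at h; omega

lemma reach_snk_eq (g : SP) {w : V g} (h : Reach g (snk g) w) : w = snk g := by
  by_contra hne
  have := reach_depth_lt g h (fun he => hne he.symm)
  exact absurd (depth_le_snk g w) (by omega)

/-- spine lemma: same fork-path and depth ≤ implies reachability -/
lemma spine (g : SP) (u v : V g) (hf : fpath g u = fpath g v)
    (hd : depth g u ≤ depth g v) : Reach g u v := by
  induction g with
  | vert =>
    rcases u with u | n
    · rcases v with v | n
      · cases u; cases v; exact Relation.ReflTransGen.refl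
      · exact n.elim
    · exact n.elim
  | seq g1 g2 ih1 ih2 =>
    have key1 : ∀ a b : V g1,
        fpath (.seq g1 g2) (emb1 g1 g2 a) = fpath (.seq g1 g2) (emb1 g1 g2 b) →
        depth (.seq g1 g2) (emb1 g1 g2 a) ≤ depth (.seq g1 g2) (emb1 g1 g2 b) →
        Reach (.seq g1 g2) (emb1 g1 g2 a) (emb1 g1 g2 b) := by
      intro a b h1 h2
      rw [fpath_emb1, fpath_emb1] at h1
      rw [depth_emb1, depth_emb1] at h2
      exact reach_emb1 _ _ (ih1 a b h1 h2)
    have cross : ∀ (a : V g1) (b : V g2), Reach (.seq g1 g2) (emb1 g1 g2 a) (emb2 g1 g2 b) :=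
      fun a b => (reach_emb1 _ _ (reach_snk g1 a)).trans (reach_emb2 _ _ (reach_src g2 b))
    rcases u with u | (n | n)
    · rcases v with v | (m | m)
      · cases u; cases v; exact Relation.ReflTransGen.refl
      · exact key1 (Sum.inl u) (Sum.inr m) hf hd
      · exact cross (Sum.inl u) (Sum.inr m)
    · rcases v with v | (m | m)
      · exact key1 (Sum.inr n) (Sum.inl v) hf hd
      · exact key1 (Sum.inr n) (Sum.inr m) hf hd
      · exact cross (Sum.inr n) (Sum.inr m)
    · rcases v with v | (m | m)
      · exfalso
        rw [depth_seq2, depth_inl] at hd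
        have h2 := depth_pos_inr g2 n
        omega
      · exfalso
        rw [depth_seq2, depth_seq1] at hd
        have h2 := depth_pos_inr g2 n
        have h3 := depth_le_snk g1 (Sum.inr m)
        omega
      · refine reach_emb2 _ _ (ih2 (Sum.inr n) (Sum.inr m) ?_ ?_)
        · rw [fpath_seq2, fpath_seq2] at hf; exact hf
        · rw [depth_seq2, depth_seq2] at hd; omega
  | par g1 g2 ih1 ih2 =>
    rcases u with u | ((x | x) | u)
    · cases u
      rcases v with v | ((y | y) | v)
      · cases v; exact Relation.ReflTransGen.refl
      · exact absurd hf (by rw [fpath_inl, fpath_parL]; simp)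
      · exact absurd hf (by rw [fpath_inl, fpath_parR]; simp)
      · exact reach_snk _ _
    · rcases v with v | ((y | y) | v)
      · exact absurd hd (by rw [depth_parL, depth_inl]; omega)
      · refine reach_embL _ _ (ih1 x y ?_ ?_)
        · rw [fpath_parL, fpath_parL] at hf
          exact congrArg List.tail hf
        · rw [depth_parL, depth_parL] at hd; omega
      · exact absurd hf (by rw [fpath_parL, fpath_parR]; simp)
      · exact reach_snk _ _
    · rcases v with v | ((y | y) | v)
      · exact absurd hd (by rw [depth_parR, depth_inl]; omega)
      · exact absurd hf (by rw [fpath_parL, fpath_parR]; simp)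
      · refine reach_embR _ _ (ih2 x y ?_ ?_)
        · rw [fpath_parR, fpath_parR] at hf
          exact congrArg List.tail hf
        · rw [depth_parR, depth_parR] at hd; omega
      · exact reach_snk _ _
    · cases u
      rcases v with v | ((y | y) | v)
      · exact absurd hd (by rw [depth_parSnk, depth_inl]; omega)
      · exact absurd hd (by
          rw [depth_parSnk, depth_parL]
          have := depth_le_snk g1 y; omega)
      · exact absurd hd (by
          rw [depth_parSnk, depth_parR]
          have := depth_le_snk g2 y; omega)
      · cases v; exact Relation.ReflTransGen.refl

end SPaux
namespace SPaux

lemma no_edge_to_inl (g : SP) (x : V g) (u : Unit) : ¬ Edge g x (Sum.inl u) := fun h => by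
  have := edge_depth_lt g h
  rw [depth_inl] at this
  omega

lemma no_edge_from_snk (g : SP) (w : V g) : ¬ Edge g (snk g) w := fun h =>
  absurd (edge_depth_lt g h) (not_lt.2 (depth_le_snk g w))

lemma emb1_ne_inrinr (g1 g2 : SP) (x : V g1) (n : NV g2) :
    emb1 g1 g2 x ≠ Sum.inr (Sum.inr n) := by
  cases x <;> simp [emb1] <;> nofun

lemma emb1_inj (g1 g2 : SP) {x y : V g1} (h : emb1 g1 g2 x = emb1 g1 g2 y) : x = y := by
  cases x with
  | inl u => cases y with
    | inl v => cases u; cases v; rfl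
    | inr m => exact absurd h (by simp [emb1])
  | inr n => cases y with
    | inl v => exact absurd h (by simp [emb1])
    | inr m =>
      simp only [emb1] at h
      injection h with h; injection h with h
      rw [h]

/-- g2-proper vertices are forward closed in a seq -/
lemma inv2 (g1 g2 : SP) (n : NV g2) (w : V (.seq g1 g2))
    (h : Reach (.seq g1 g2) (Sum.inr (Sum.inr n)) w) :
    ∃ m, w = Sum.inr (Sum.inr m) ∧ Reach g2 (Sum.inr n) (Sum.inr m) := by
  induction h with
  | refl => exact ⟨n, rfl, Relation.ReflTransGen.refl⟩
  | tail hr he ih =>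
    obtain ⟨m, rfl, hm⟩ := ih
    rcases he with ⟨a, b, hab, ha, rfl⟩ | ⟨a, b, hab, ha, rfl⟩
    · exact absurd ha.symm (emb1_ne_inrinr g1 g2 a m)
    · cases a with
      | inl u =>
        exact absurd ha.symm (by cases hs : snk g1 with
          | inl v => show emb1 g1 g2 (snk g1) ≠ _; rw [hs]; simp [emb1] <;> nofun
          | inr v => show emb1 g1 g2 (snk g1) ≠ _; rw [hs]; simp [emb1] <;> nofun)
      | inr a' =>
        obtain rfl : m = a' := by
          have h2 : (Sum.inr (Sum.inr m) : V (.seq g1 g2)) = Sum.inr (Sum.inr a') := ha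
          exact Sum.inr_injective (Sum.inr_injective h2)
        cases b with
        | inl u => exact absurd hab (no_edge_to_inl g2 _ u)
        | inr b' => exact ⟨b', rfl, Relation.ReflTransGen.tail hm hab⟩

lemma inv1 (g1 g2 : SP) (a b : V g1)
    (h : Reach (.seq g1 g2) (emb1 g1 g2 a) (emb1 g1 g2 b)) : Reach g1 a b := by
  suffices H : ∀ x, Reach (.seq g1 g2) x (emb1 g1 g2 b) →
      ∀ a, x = emb1 g1 g2 a → Reach g1 a b from H _ h a rfl
  intro x hx
  induction hx using Relation.ReflTransGen.head_induction_on with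
  | refl =>
    intro a ha
    have hba : b = a := emb1_inj g1 g2 ha
    subst hba
    exact Relation.ReflTransGen.refl
  | head he hr ih =>
    intro a ha
    subst ha
    rcases he with ⟨a', b', hab, ha', hb'⟩ | ⟨a', b', hab, ha', hb'⟩
    · have haa : a = a' := emb1_inj g1 g2 ha'
      subst haa
      exact Relation.ReflTransGen.head hab (ih _ hb')
    · cases a' with
      | inl u =>
        cases b' with
        | inl u' => exact absurd hab (no_edge_to_inl g2 _ u')
        | inr m =>
          subst hb'
          obtain ⟨m', hw, -⟩ := inv2 g1 g2 m _ hr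
          exact absurd hw (emb1_ne_inrinr g1 g2 b m')
      | inr a'' =>
        exfalso
        have : emb2 g1 g2 (Sum.inr a'') = Sum.inr (Sum.inr a'') := rfl
        rw [this] at ha'
        exact emb1_ne_inrinr g1 g2 a a'' ha'


lemma embL_inj (g1 g2 : SP) {y a : V g1} (h : embL g1 g2 y = embL g1 g2 a) : y = a := by
  simp only [embL] at h
  injection h with h; injection h with h; injection h with h

lemma embR_inj (g1 g2 : SP) {y a : V g2} (h : embR g1 g2 y = embR g1 g2 a) : y = a := by
  simp only [embR] at h
  injection h with h; injection h with h; injection h with h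

lemma embL_ne_embR (g1 g2 : SP) (y : V g1) (a : V g2) : embL g1 g2 y ≠ embR g1 g2 a := by
  intro h
  simp only [embL, embR] at h
  injection h with h; injection h with h; injection h

lemma embL_ne_src (g1 g2 : SP) (y : V g1) : embL g1 g2 y ≠ src (.par g1 g2) := by
  intro h
  simp only [embL, src] at h
  injection h

lemma embR_ne_src (g1 g2 : SP) (y : V g2) : embR g1 g2 y ≠ src (.par g1 g2) := by
  intro h
  simp only [embR, src] at h
  injection h

lemma invL (g1 g2 : SP) (x : V g1) (w : V (.par g1 g2))
    (h : Reach (.par g1 g2) (embL g1 g2 x) w) :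
    (∃ y, w = embL g1 g2 y ∧ Reach g1 x y) ∨ w = snk (.par g1 g2) := by
  induction h with
  | refl => exact Or.inl ⟨x, rfl, Relation.ReflTransGen.refl⟩
  | tail hr he ih =>
    rcases ih with ⟨y, rfl, hy⟩ | rfl
    · rcases he with ⟨a, b, hab, ha, rfl⟩ | ⟨a, b, hab, ha, rfl⟩ | ⟨ha, rfl⟩ | ⟨ha, rfl⟩
        | ⟨ha, rfl⟩ | ⟨ha, rfl⟩
      · obtain rfl : y = a := embL_inj g1 g2 ha
        exact Or.inl ⟨b, rfl, Relation.ReflTransGen.tail hy hab⟩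
      · exact absurd ha (embL_ne_embR g1 g2 y a)
      · exact absurd ha (embL_ne_src g1 g2 y)
      · exact absurd ha (embL_ne_src g1 g2 y)
      · exact Or.inr rfl
      · exact absurd ha (embL_ne_embR g1 g2 y (snk g2))
    · exact absurd he (no_edge_from_snk _ _)

lemma invR (g1 g2 : SP) (x : V g2) (w : V (.par g1 g2))
    (h : Reach (.par g1 g2) (embR g1 g2 x) w) :
    (∃ y, w = embR g1 g2 y ∧ Reach g2 x y) ∨ w = snk (.par g1 g2) := by
  induction h with
  | refl => exact Or.inl ⟨x, rfl, Relation.ReflTransGen.refl⟩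
  | tail hr he ih =>
    rcases ih with ⟨y, rfl, hy⟩ | rfl
    · rcases he with ⟨a, b, hab, ha, rfl⟩ | ⟨a, b, hab, ha, rfl⟩ | ⟨ha, rfl⟩ | ⟨ha, rfl⟩
        | ⟨ha, rfl⟩ | ⟨ha, rfl⟩
      · exact absurd ha.symm (embL_ne_embR g1 g2 a y)
      · obtain rfl : y = a := embR_inj g1 g2 ha
        exact Or.inl ⟨b, rfl, Relation.ReflTransGen.tail hy hab⟩
      · exact absurd ha (embR_ne_src g1 g2 y)
      · exact absurd ha (embR_ne_src g1 g2 y)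
      · exact absurd ha.symm (embL_ne_embR g1 g2 (snk g1) y)
      · exact Or.inr rfl
    · exact absurd he (no_edge_from_snk _ _)

lemma lcp_nil_left (b : List Bool) : lcp [] b = [] := by cases b <;> rfl
lemma lcp_cons (x : Bool) (a' : List Bool) (y : Bool) (b' : List Bool) :
    lcp (x :: a') (y :: b') = if x = y then x :: lcp a' b' else [] := rfl

lemma lcp_prefix_left : ∀ a b : List Bool, lcp a b <+: a := by
  intro a
  induction a with
  | nil => intro b; rw [lcp_nil_left]
  | cons x a' ih =>
    intro b
    cases b with
    | nil => exact List.nil_prefix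
    | cons y b' =>
      rw [lcp_cons]
      split
      · exact List.cons_prefix_cons.mpr ⟨rfl, ih b'⟩
      · exact List.nil_prefix

lemma lcp_common : ∀ (c a b : List Bool), c <+: a → c <+: b → c <+: lcp a b := by
  intro c
  induction c with
  | nil => intro a b _ _; exact List.nil_prefix
  | cons x c' ih =>
    intro a b ha hb
    obtain ⟨ta, rfl⟩ := ha
    obtain ⟨tb, rfl⟩ := hb
    show x :: c' <+: lcp (x :: (c' ++ ta)) (x :: (c' ++ tb))
    rw [lcp_cons, if_pos rfl]
    exact List.cons_prefix_cons.mpr ⟨rfl, ih _ _ ⟨ta, rfl⟩ ⟨tb, rfl⟩⟩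

end SPaux
namespace SPaux

lemma lcp_prefix_right : ∀ a b : List Bool, lcp a b <+: b := by
  intro a
  induction a with
  | nil => intro b; rw [lcp_nil_left]; exact List.nil_prefix
  | cons x a' ih =>
    intro b
    cases b with
    | nil => exact List.nil_prefix
    | cons y b' =>
      rw [lcp_cons]
      split
      · next hxy => exact hxy ▸ List.cons_prefix_cons.mpr ⟨rfl, ih b'⟩
      · exact List.nil_prefix

/-- Key structural lemma: if `p` is a proper prefix of `fpath u`, there are
fork and join vertices `f`, `j` with fork-path `p` bracketing `u`. -/
lemma K2 (g : SP) : ∀ (u : V g) (p : List Bool) (b : Bool) (q : List Bool),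
    fpath g u = p ++ b :: q →
    ∃ f j : V g, fpath g f = p ∧ fpath g j = p ∧
      depth g f < depth g u ∧ depth g u < depth g j ∧
      Reach g f u ∧ Reach g u j ∧
      (∀ w, fpath g w = p → depth g w ≤ depth g f ∨ depth g j ≤ depth g w) ∧
      (∀ w, Reach g u w → (p ++ [b]) <+: fpath g w ∨ Reach g j w) := by
  induction g with
  | vert =>
    intro u p b q h
    exfalso
    rcases u with u | n
    · rw [fpath_inl] at h; simp at h
    · exact n.elim
  | seq g1 g2 ih1 ih2 =>
    intro u p b q h
    rcases u with u | (n | n)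
    · rw [fpath_inl] at h; simp at h
    · -- u = emb1 g1 g2 (Sum.inr n)
      rw [fpath_seq1] at h
      obtain ⟨f, j, hf, hj, hdf, hdj, hrf, hrj, gap, ecl⟩ := ih1 (Sum.inr n) p b q h
      refine ⟨emb1 g1 g2 f, emb1 g1 g2 j, ?_, ?_, ?_, ?_, ?_, ?_, ?_, ?_⟩
      · rw [fpath_emb1]; exact hf
      · rw [fpath_emb1]; exact hj
      · show depth (.seq g1 g2) (emb1 g1 g2 f) < depth (.seq g1 g2) (emb1 g1 g2 (Sum.inr n))
        rw [depth_emb1, depth_emb1]; exact hdf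
      · show depth (.seq g1 g2) (emb1 g1 g2 (Sum.inr n)) < depth (.seq g1 g2) (emb1 g1 g2 j)
        rw [depth_emb1, depth_emb1]; exact hdj
      · exact reach_emb1 _ _ hrf
      · exact reach_emb1 _ _ hrj
      · intro w hw
        rcases w with w | (m | m)
        · left
          rw [depth_inl, depth_emb1]; omega
        · rw [fpath_seq1] at hw
          rcases gap (Sum.inr m) hw with hle | hle
          · left; rw [depth_seq1, depth_emb1]; exact hle
          · right; rw [depth_seq1, depth_emb1]; exact hle
        · right
          rw [depth_seq2, depth_emb1]
          have h1 := depth_le_snk g1 j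
          have h2 := depth_pos_inr g2 m
          omega
      · intro w hr
        have key : ∀ w' : V g1,
            Reach (.seq g1 g2) (emb1 g1 g2 (Sum.inr n)) (emb1 g1 g2 w') →
            (p ++ [b]) <+: fpath (.seq g1 g2) (emb1 g1 g2 w') ∨
              Reach (.seq g1 g2) (emb1 g1 g2 j) (emb1 g1 g2 w') := by
          intro w' hr'
          rcases ecl w' (inv1 g1 g2 _ _ hr') with hp | hR
          · left; rw [fpath_emb1]; exact hp
          · right; exact reach_emb1 _ _ hR
        rcases w with w | (m | m)
        · exact key (Sum.inl w) hr
        · exact key (Sum.inr m) hr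
        · right
          exact (reach_emb1 _ _ (reach_snk g1 j)).trans
            (reach_emb2 _ _ (reach_src g2 (Sum.inr m)))
    · -- u = emb2 g1 g2 (Sum.inr n)
      rw [fpath_seq2] at h
      obtain ⟨f, j, hf, hj, hdf, hdj, hrf, hrj, gap, ecl⟩ := ih2 (Sum.inr n) p b q h
      refine ⟨emb2 g1 g2 f, emb2 g1 g2 j, ?_, ?_, ?_, ?_, ?_, ?_, ?_, ?_⟩
      · rw [fpath_emb2]; exact hf
      · rw [fpath_emb2]; exact hj
      · show depth (.seq g1 g2) (emb2 g1 g2 f) < depth (.seq g1 g2) (emb2 g1 g2 (Sum.inr n))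
        rw [depth_emb2, depth_emb2]; omega
      · show depth (.seq g1 g2) (emb2 g1 g2 (Sum.inr n)) < depth (.seq g1 g2) (emb2 g1 g2 j)
        rw [depth_emb2, depth_emb2]; omega
      · exact reach_emb2 _ _ hrf
      · exact reach_emb2 _ _ hrj
      · intro w hw
        rcases w with w | (m | m)
        · left; rw [depth_inl, depth_emb2]; omega
        · left
          rw [depth_seq1, depth_emb2]
          have := depth_le_snk g1 (Sum.inr m)
          omega
        · rw [fpath_seq2] at hw
          rcases gap (Sum.inr m) hw with hle | hle
          · left; rw [depth_seq2, depth_emb2]; omega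
          · right; rw [depth_seq2, depth_emb2]; omega
      · intro w hr
        obtain ⟨m, rfl, hm⟩ := inv2 g1 g2 n w hr
        rcases ecl (Sum.inr m) hm with hp | hR
        · left; exact hp
        · right; exact reach_emb2 _ _ hR
  | par g1 g2 ih1 ih2 =>
    intro u p b q h
    rcases u with u | ((x | x) | u)
    · rw [fpath_inl] at h; simp at h
    · -- u = embL g1 g2 x
      rw [fpath_parL] at h
      cases p with
      | nil =>
        obtain ⟨hb, hq⟩ : false = b ∧ fpath g1 x = q := by
          simpa using h
        refine ⟨src (.par g1 g2), snk (.par g1 g2), fpath_src _, fpath_snk _,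
          ?_, ?_, reach_src _ _, reach_snk _ _, ?_, ?_⟩
        · rw [depth_src, depth_parL]; omega
        · show depth (.par g1 g2) (Sum.inr (Sum.inl (Sum.inl x))) < depth (.par g1 g2) (Sum.inr (Sum.inr ()))
          rw [depth_parL, depth_parSnk]
          have := depth_le_snk g1 x
          omega
        · intro w hw
          rcases w with w | ((y | y) | w)
          · left; rw [depth_inl, depth_src]
          · rw [fpath_parL] at hw; simp at hw
          · rw [fpath_parR] at hw; simp at hw
          · right; cases w; exact le_rfl
        · intro w hr
          rcases invL g1 g2 x w hr with ⟨y, rfl, hy⟩ | rfl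
          · left
            rw [fpath_embL, ← hb]
            exact ⟨fpath g1 y, rfl⟩
          · right; exact Relation.ReflTransGen.refl
      | cons p0 p' =>
        obtain ⟨hb, hq⟩ : false = p0 ∧ fpath g1 x = p' ++ b :: q := by
          simpa using h
        obtain ⟨f, j, hf, hj, hdf, hdj, hrf, hrj, gap, ecl⟩ := ih1 x p' b q hq
        refine ⟨embL g1 g2 f, embL g1 g2 j, ?_, ?_, ?_, ?_,
          reach_embL _ _ hrf, reach_embL _ _ hrj, ?_, ?_⟩
        · rw [fpath_embL, hf, ← hb]
        · rw [fpath_embL, hj, ← hb]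
        · show depth (.par g1 g2) (Sum.inr (Sum.inl (Sum.inl f))) < depth (.par g1 g2) (Sum.inr (Sum.inl (Sum.inl x)))
          rw [depth_parL, depth_parL]; omega
        · show depth (.par g1 g2) (Sum.inr (Sum.inl (Sum.inl x))) < depth (.par g1 g2) (Sum.inr (Sum.inl (Sum.inl j)))
          rw [depth_parL, depth_parL]; omega
        · intro w hw
          rcases w with w | ((y | y) | w)
          · left; rw [depth_inl, depth_embL]; omega
          · rw [fpath_parL, ← hb] at hw
            have hw' : fpath g1 y = p' := by
              injection hw
            rcases gap y hw' with hle | hle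
            · left; rw [depth_parL, depth_embL]; omega
            · right; rw [depth_parL, depth_embL]; omega
          · exfalso
            rw [fpath_parR, ← hb] at hw
            injection hw with h1 h2
            exact Bool.noConfusion h1
          · right
            show depth (.par g1 g2) (Sum.inr (Sum.inl (Sum.inl j))) ≤ depth (.par g1 g2) (Sum.inr (Sum.inr w))
            rw [depth_parL, depth_parSnk]
            have := depth_le_snk g1 j
            omega
        · intro w hr
          rcases invL g1 g2 x w hr with ⟨y, rfl, hy⟩ | rfl
          · rcases ecl y hy with hp | hR
            · left
              rw [fpath_embL, ← hb]
              show (false :: p') ++ [b] <+: false :: fpath g1 y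
              exact List.cons_prefix_cons.mpr ⟨rfl, hp⟩
            · right; exact reach_embL _ _ hR
          · right; exact reach_snk _ _
    · -- u = embR g1 g2 x
      rw [fpath_parR] at h
      cases p with
      | nil =>
        obtain ⟨hb, hq⟩ : true = b ∧ fpath g2 x = q := by
          simpa using h
        refine ⟨src (.par g1 g2), snk (.par g1 g2), fpath_src _, fpath_snk _,
          ?_, ?_, reach_src _ _, reach_snk _ _, ?_, ?_⟩
        · rw [depth_src, depth_parR]; omega
        · show depth (.par g1 g2) (Sum.inr (Sum.inl (Sum.inr x))) < depth (.par g1 g2) (Sum.inr (Sum.inr ()))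
          rw [depth_parR, depth_parSnk]
          have := depth_le_snk g2 x
          omega
        · intro w hw
          rcases w with w | ((y | y) | w)
          · left; rw [depth_inl, depth_src]
          · rw [fpath_parL] at hw; simp at hw
          · rw [fpath_parR] at hw; simp at hw
          · right; cases w; exact le_rfl
        · intro w hr
          rcases invR g1 g2 x w hr with ⟨y, rfl, hy⟩ | rfl
          · left
            rw [fpath_embR, ← hb]
            exact ⟨fpath g2 y, rfl⟩
          · right; exact Relation.ReflTransGen.refl
      | cons p0 p' =>
        obtain ⟨hb, hq⟩ : true = p0 ∧ fpath g2 x = p' ++ b :: q := by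
          simpa using h
        obtain ⟨f, j, hf, hj, hdf, hdj, hrf, hrj, gap, ecl⟩ := ih2 x p' b q hq
        refine ⟨embR g1 g2 f, embR g1 g2 j, ?_, ?_, ?_, ?_,
          reach_embR _ _ hrf, reach_embR _ _ hrj, ?_, ?_⟩
        · rw [fpath_embR, hf, ← hb]
        · rw [fpath_embR, hj, ← hb]
        · show depth (.par g1 g2) (Sum.inr (Sum.inl (Sum.inr f))) < depth (.par g1 g2) (Sum.inr (Sum.inl (Sum.inr x)))
          rw [depth_parR, depth_parR]; omega
        · show depth (.par g1 g2) (Sum.inr (Sum.inl (Sum.inr x))) < depth (.par g1 g2) (Sum.inr (Sum.inl (Sum.inr j)))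
          rw [depth_parR, depth_parR]; omega
        · intro w hw
          rcases w with w | ((y | y) | w)
          · left; rw [depth_inl, depth_embR]; omega
          · exfalso
            rw [fpath_parL, ← hb] at hw
            injection hw with h1 h2
            exact Bool.noConfusion h1
          · rw [fpath_parR, ← hb] at hw
            have hw' : fpath g2 y = p' := by
              injection hw
            rcases gap y hw' with hle | hle
            · left; rw [depth_parR, depth_embR]; omega
            · right; rw [depth_parR, depth_embR]; omega
          · right
            show depth (.par g1 g2) (Sum.inr (Sum.inl (Sum.inr j))) ≤ depth (.par g1 g2) (Sum.inr (Sum.inr w))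
            rw [depth_parR, depth_parSnk]
            have := depth_le_snk g2 j
            omega
        · intro w hr
          rcases invR g1 g2 x w hr with ⟨y, rfl, hy⟩ | rfl
          · rcases ecl y hy with hp | hR
            · left
              rw [fpath_embR, ← hb]
              show (true :: p') ++ [b] <+: true :: fpath g2 y
              exact List.cons_prefix_cons.mpr ⟨rfl, hp⟩
            · right; exact reach_embR _ _ hR
          · right; exact reach_snk _ _
    · cases u
      rw [fpath_parSnk] at h; simp at h

end SPaux
namespace SPaux

lemma master (g : SP) (u v : V g) :
    Reach g u v ↔ ∃ w : V g, fpath g w = lcp (fpath g u) (fpath g v) ∧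
      depth g u ≤ depth g w ∧ depth g w ≤ depth g v := by
  constructor
  · intro hr
    obtain ⟨t, ht⟩ := lcp_prefix_left (fpath g u) (fpath g v)
    cases t with
    | nil =>
      rw [List.append_nil] at ht
      exact ⟨u, ht.symm, le_rfl, reach_depth_le g hr⟩
    | cons b q =>
      obtain ⟨f, j, hf, hj, hdf, hdj, hrf, hrj, gap, ecl⟩ :=
        K2 g u (lcp (fpath g u) (fpath g v)) b q ht.symm
      refine ⟨j, hj, hdj.le, ?_⟩
      rcases ecl v hr with hp | hR
      · exfalso
        have h1 : lcp (fpath g u) (fpath g v) ++ [b] <+: fpath g u :=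
          ⟨q, by simpa using ht⟩
        have h2 := lcp_common _ _ _ h1 hp
        have := h2.length_le
        simp at this
      · exact reach_depth_le g hR
  · rintro ⟨w, hw, h1, h2⟩
    have huw : Reach g u w := by
      obtain ⟨t, ht⟩ := lcp_prefix_left (fpath g u) (fpath g v)
      cases t with
      | nil =>
        rw [List.append_nil] at ht
        refine spine g u w ?_ h1
        rw [hw]; exact ht.symm
      | cons b q =>
        obtain ⟨f, j, hf, hj, hdf, hdj, hrf, hrj, gap, ecl⟩ :=
          K2 g u (lcp (fpath g u) (fpath g v)) b q ht.symm
        rcases gap w hw with hle | hle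
        · omega
        · exact hrj.trans (spine g j w (by rw [hj, hw]) hle)
    have hwv : Reach g w v := by
      obtain ⟨t, ht⟩ := lcp_prefix_right (fpath g u) (fpath g v)
      cases t with
      | nil =>
        rw [List.append_nil] at ht
        refine spine g w v ?_ h2
        rw [hw]; exact ht
      | cons b q =>
        obtain ⟨f, j, hf, hj, hdf, hdj, hrf, hrj, gap, ecl⟩ :=
          K2 g v (lcp (fpath g u) (fpath g v)) b q ht.symm
        rcases gap w hw with hle | hle
        · exact (spine g w f (by rw [hw, hf]) hle).trans hrf
        · omega
    exact huw.trans hwv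

end SPaux
/-- with `d(u) ≤ d(v)` and `c` the critical vertex of `(u, v)`
(fork-path equal to `lcp (f u) (f v)`, of maximal dag-depth subject to
`d(c) ≤ d(v)`), we have `u ≼ v` iff `d(u) ≤ d(c) ≤ d(v)`. -/
theorem reach_iff_depth_critical (g : SP) (u v c : V g)
    (hd : depth g u ≤ depth g v)
    (hc : fpath g c = lcp (fpath g u) (fpath g v))
    (hcd : depth g c ≤ depth g v)
    (hmax : ∀ c' : V g, fpath g c' = lcp (fpath g u) (fpath g v) →
      depth g c' ≤ depth g v → depth g c' ≤ depth g c) :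
    Reach g u v ↔ (depth g u ≤ depth g c ∧ depth g c ≤ depth g v) := by
  constructor
  · intro hr
    obtain ⟨w, hw, h1, h2⟩ := (SPaux.master g u v).mp hr
    exact ⟨h1.trans (hmax w hw h2), hcd⟩
  · rintro ⟨h1, h2⟩
    exact (SPaux.master g u v).mpr ⟨c, hc, h1, h2⟩
end
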